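/- arXiv:2409.00306 — 3 statements merged into one kernel-verified Lean document; each statement's English description precedes it below -/
import Mathlib

section
/- For all real a > 1 and every integer n ≥ 2, the sum over j from 2 to n of 1/(a^j - 1) is at most -ln(1 - 1/a)/ln(a). -/
theorem stmt_1 (a : ℝ) (ha : 1 < a) (n : ℕ) (hn : 2 ≤ n) :
    ∑ j ∈ Finset.Icc 2 n, 1 / (a ^ j - 1) ≤ - Real.log (1 - 1 / a) / Real.log a := by
  have ha0 : (0:ℝ) < a := lt_trans one_pos ha
  have hloga : 0 < Real.log a := Real.log_pos ha
  have hpow : ∀ j : ℕ, 1 ≤ j → 1 < a ^ j := fun j hj => one_lt_pow₀ ha (by omega)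
  have hx : ∀ j : ℕ, 1 ≤ j → (0:ℝ) < 1 - 1 / a ^ j := by
    intro j hj
    have h1 : 1 / a ^ j < 1 := by
      rw [div_lt_one (by positivity)]; exact hpow j hj
    linarith
  have key : ∀ m : ℕ, 1 ≤ m →
      ∑ j ∈ Finset.Icc 2 m, 1 / (a ^ j - 1) ≤
        (Real.log (1 - 1 / a ^ m) - Real.log (1 - 1 / a)) / Real.log a := by
    intro m hm
    induction m with
    | zero => omega
    | succ k ih =>
      rcases eq_or_lt_of_le hm with h1 | h1
      · have hk : k = 0 := by omega
        subst hk
        simp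
      · have hk1 : 1 ≤ k := by omega
        have ih' := ih hk1
        rw [Finset.sum_Icc_succ_top (by omega : 2 ≤ k + 1)]
        have hxk := hx k hk1
        have hxk1 := hx (k+1) (by omega)
        have hD : (0:ℝ) < a ^ (k+1) - 1 := by
          have := hpow (k+1) (by omega); linarith
        have hterm : 1 / (a ^ (k+1) - 1) ≤
            (Real.log (1 - 1 / a ^ (k+1)) - Real.log (1 - 1 / a ^ k)) / Real.log a := by
          rw [le_div_iff₀ hloga]
          have step1 : Real.log (1 - 1 / a ^ k) - Real.log (1 - 1 / a ^ (k+1))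
              ≤ (1 - 1 / a ^ k) / (1 - 1 / a ^ (k+1)) - 1 := by
            have := Real.log_le_sub_one_of_pos (x := (1 - 1 / a ^ k) / (1 - 1 / a ^ (k+1)))
              (by positivity)
            rwa [Real.log_div (by linarith) (by linarith)] at this
          have step2 : (1 - 1 / a ^ k) / (1 - 1 / a ^ (k+1)) - 1
              = - ((a - 1) / (a ^ (k+1) - 1)) := by
            have hak : (0:ℝ) < a ^ k := by positivity
            field_simp
            ring
          have step3 : Real.log a ≤ a - 1 := Real.log_le_sub_one_of_pos ha0
          have step4 : 1 / (a ^ (k+1) - 1) * Real.log a ≤ (a - 1) / (a ^ (k+1) - 1) := by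
            rw [one_div_mul_eq_div]
            gcongr
          linarith [step4]
        calc ∑ j ∈ Finset.Icc 2 k, 1 / (a ^ j - 1) + 1 / (a ^ (k+1) - 1)
            ≤ (Real.log (1 - 1 / a ^ k) - Real.log (1 - 1 / a)) / Real.log a
              + (Real.log (1 - 1 / a ^ (k+1)) - Real.log (1 - 1 / a ^ k)) / Real.log a :=
              add_le_add ih' hterm
          _ = (Real.log (1 - 1 / a ^ (k+1)) - Real.log (1 - 1 / a)) / Real.log a := by
              rw [← add_div]; ring_nf
  have hmain := key n (by omega)
  have hlogn : Real.log (1 - 1 / a ^ n) ≤ 0 := by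
    apply Real.log_nonpos
    · linarith [hx n (by omega)]
    · have : 0 < 1 / a ^ n := by positivity
      linarith
  have : (Real.log (1 - 1 / a ^ n) - Real.log (1 - 1 / a)) / Real.log a
      ≤ - Real.log (1 - 1 / a) / Real.log a := by
    gcongr
    linarith
  linarith
end

section
/- For the (1+1) EA with one-bit mutation optimizing LeadingOnes of size n under one-bit noise with rate q < 1 and without re-evaluations, the expected number of iterations until the algorithm's stored parent is the all-ones string with correctly evaluated fitness is at most (1+q)n²/(1-q)² + 3q/(2(1-q)). -/
open MeasureTheory ENNReal

/-- The LeadingOnes value of a bit string. -/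
def leadingOnes {n : ℕ} (x : Fin n → Bool) : ℕ :=
  (Finset.univ.filter (fun i : Fin n => ∀ j : Fin n, j ≤ i → x j = true)).card

/-- One-bit noise with rate `q`: with probability `q` a uniformly random position is
flipped (returned as `some i`), otherwise nothing is flipped (`none`). -/
noncomputable def oneBitNoise (n : ℕ) (hn : 0 < n) (q : ℝ) (hq1 : q ≤ 1) :
    PMF (Option (Fin n)) :=
  (PMF.bernoulli (Real.toNNReal q) (Real.toNNReal_le_one.mpr hq1)).bind
    (fun b =>
      if b then
        haveI : Nonempty (Fin n) := Fin.pos_iff_nonempty.mp hn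
        (PMF.uniformOfFintype (Fin n)).map some
      else PMF.pure none)

/-- Apply a (possibly absent) one-bit flip to a bit string. -/
def applyOneFlip {n : ℕ} (x : Fin n → Bool) : Option (Fin n) → (Fin n → Bool)
  | none => x
  | some i => Function.update x i (!x i)

/-- States of the (1+1) EA without re-evaluations: the current parent, its stored
(once-evaluated, possibly noisy) fitness value, and a flag recording whether the
algorithm has already had the all-ones string as parent with correctly evaluated
fitness `n`. -/
abbrev EAState (n : ℕ) : Type := (Fin n → Bool) × ℕ × Bool

/-- Whether parent `x` with stored fitness `fx` is the all-ones string evaluated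
properly (stored fitness equal to the true optimum value `n`). -/
def isOpt (n : ℕ) (x : Fin n → Bool) (fx : ℕ) : Bool :=
  decide ((∀ j : Fin n, x j = true) ∧ fx = n)

/-- One iteration of the (1+1) EA with one-bit mutation on LeadingOnes under one-bit
noise with rate `q`, without re-evaluations: mutate the parent by flipping one
uniformly random bit, evaluate the offspring once under noise, and accept it iff its
noisy fitness is at least the stored fitness of the parent. -/
noncomputable def eaStep (n : ℕ) (hn : 0 < n) (q : ℝ) (hq1 : q ≤ 1) :
    EAState n → PMF (EAState n) := fun s =>
  haveI : Nonempty (Fin n) := Fin.pos_iff_nonempty.mp hn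
  (PMF.uniformOfFintype (Fin n)).bind (fun i =>
    (oneBitNoise n hn q hq1).bind (fun o =>
      let y := Function.update s.1 i (!s.1 i)
      let fy := leadingOnes (applyOneFlip y o)
      let x' := if s.2.1 ≤ fy then y else s.1
      let fx' := if s.2.1 ≤ fy then fy else s.2.1
      PMF.pure (x', fx', s.2.2 || isOpt n x' fx')))

/-- The initial state of the (1+1) EA: a uniformly random parent, evaluated once
under one-bit noise. -/
noncomputable def eaInit (n : ℕ) (hn : 0 < n) (q : ℝ) (hq1 : q ≤ 1) :
    PMF (EAState n) :=
  (PMF.uniformOfFintype (Fin n → Bool)).bind (fun x =>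
    (oneBitNoise n hn q hq1).bind (fun o =>
      let fx := leadingOnes (applyOneFlip x o)
      PMF.pure (x, fx, isOpt n x fx)))

/-- The distribution of the state of the (1+1) EA at the beginning of iteration `t`. -/
noncomputable def eaDist (n : ℕ) (hn : 0 < n) (q : ℝ) (hq1 : q ≤ 1) :
    ℕ → PMF (EAState n)
  | 0 => eaInit n hn q hq1
  | t + 1 => (eaDist n hn q hq1 t).bind (eaStep n hn q hq1)

set_option maxHeartbeats 1000000

namespace EA
variable {n : ℕ}

lemma card_filter_coe_lt {m : ℕ} (hm : m ≤ n) :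
    (Finset.univ.filter (fun i : Fin n => (i : ℕ) < m)).card = m := by
  apply Finset.card_eq_of_bijective (fun i h => (⟨i, lt_of_lt_of_le h hm⟩ : Fin n))
  · intro a ha
    simp only [Finset.mem_filter, Finset.mem_univ, true_and] at ha
    exact ⟨(a : ℕ), ha, by ext; rfl⟩
  · intro i h
    simp only [Finset.mem_filter, Finset.mem_univ, true_and]
    exact h
  · intro i j hi hj hij
    exact congrArg Fin.val hij

lemma lo_le (x : Fin n → Bool) : leadingOnes x ≤ n := by
  calc (Finset.univ.filter _).card ≤ Finset.univ.card := Finset.card_filter_le _ _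
  _ = n := by simp

lemma mem_lo_iff (x : Fin n → Bool) (i : Fin n) :
    (∀ j : Fin n, j ≤ i → x j = true) ↔ (i : ℕ) < leadingOnes x := by
  set S := Finset.univ.filter (fun i : Fin n => ∀ j : Fin n, j ≤ i → x j = true) with hS
  have hdown : ∀ a b : Fin n, a ∈ S → b ≤ a → b ∈ S := by
    intro a b ha hba
    simp only [hS, Finset.mem_filter, Finset.mem_univ, true_and] at ha ⊢
    exact fun j hj => ha j (le_trans hj hba)
  constructor
  · intro h
    have hiS : i ∈ S := by
      simp only [hS, Finset.mem_filter, Finset.mem_univ, true_and]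
      exact h
    have hsub : Finset.univ.filter (fun j : Fin n => (j : ℕ) < (i : ℕ) + 1) ⊆ S := by
      intro j hj
      simp only [Finset.mem_filter, Finset.mem_univ, true_and] at hj
      exact hdown i j hiS (by omega)
    have hcc := Finset.card_le_card hsub
    rw [card_filter_coe_lt (by omega)] at hcc
    have hcard : leadingOnes x = S.card := rfl
    omega
  · intro h
    by_contra hni
    have hiS : i ∉ S := by simp only [hS, Finset.mem_filter, Finset.mem_univ, true_and]; exact hni
    have hsub : S ⊆ Finset.univ.filter (fun j : Fin n => (j : ℕ) < (i : ℕ)) := by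
      intro j hj
      simp only [Finset.mem_filter, Finset.mem_univ, true_and]
      by_contra hij
      exact hiS (hdown j i hj (by omega))
    have hcc := Finset.card_le_card hsub
    rw [card_filter_coe_lt (le_of_lt i.isLt)] at hcc
    have hcard : leadingOnes x = S.card := rfl
    omega

lemma lo_true {x : Fin n → Bool} {j : Fin n} (h : (j : ℕ) < leadingOnes x) : x j = true :=
  ((mem_lo_iff x j).mpr h) j le_rfl

lemma lo_false {x : Fin n → Bool} (h : leadingOnes x < n) : x ⟨leadingOnes x, h⟩ = false := by
  by_contra hx
  have hx' : x ⟨leadingOnes x, h⟩ = true := by simpa using hx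
  have : (⟨leadingOnes x, h⟩ : Fin n) ∈ Finset.univ.filter
      (fun i : Fin n => ∀ j : Fin n, j ≤ i → x j = true) := by
    simp only [Finset.mem_filter, Finset.mem_univ, true_and]
    intro j hj
    rcases lt_or_eq_of_le (show (j:ℕ) ≤ leadingOnes x from hj) with h' | h'
    · exact lo_true h'
    · have : j = ⟨leadingOnes x, h⟩ := Fin.ext h'
      rw [this]; exact hx'
  have h2 := (mem_lo_iff x _).mp (by
    simp only [Finset.mem_filter, Finset.mem_univ, true_and] at this; exact this)
  simp at h2

lemma lo_eq {x : Fin n → Bool} {m : ℕ} (hm : m ≤ n)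
    (h1 : ∀ j : Fin n, (j : ℕ) < m → x j = true)
    (h2 : ∀ (hmn : m < n), x ⟨m, hmn⟩ = false) : leadingOnes x = m := by
  rcases lt_trichotomy (leadingOnes x) m with h | h | h
  · have hLn : leadingOnes x < n := lt_of_lt_of_le h hm
    have := h1 ⟨leadingOnes x, hLn⟩ h
    rw [lo_false hLn] at this
    exact absurd this (by simp)
  · exact h
  · have hmn : m < n := lt_of_lt_of_le h (lo_le x)
    have := lo_true (x := x) (j := ⟨m, hmn⟩) h
    rw [h2 hmn] at this
    exact absurd this (by simp)

lemma lo_eq_n {x : Fin n → Bool} (h : ∀ j, x j = true) : leadingOnes x = n :=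
  lo_eq le_rfl (fun j _ => h j) (fun hmn => absurd hmn (lt_irrefl n))

lemma all_true_of_lo {x : Fin n → Bool} (h : leadingOnes x = n) : ∀ j, x j = true :=
  fun j => lo_true (by rw [h]; exact j.isLt)

lemma lo_update_gt {z : Fin n → Bool} {u : Fin n} (hu : leadingOnes z < (u : ℕ)) (b : Bool) :
    leadingOnes (Function.update z u b) = leadingOnes z := by
  apply lo_eq (lo_le z)
  · intro j hj
    rw [Function.update_of_ne (by intro h; rw [h] at hj; omega)]
    exact lo_true hj
  · intro hmn
    rw [Function.update_of_ne (by intro h; have := congrArg Fin.val h; simp at this; omega)]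
    exact lo_false hmn

lemma lo_update_false {z : Fin n → Bool} {u : Fin n} (hu : (u : ℕ) < leadingOnes z) :
    leadingOnes (Function.update z u false) = (u : ℕ) := by
  apply lo_eq (le_of_lt u.isLt)
  · intro j hj
    rw [Function.update_of_ne (by intro h; rw [h] at hj; omega)]
    exact lo_true (by omega)
  · intro hmn
    have : (⟨(u : ℕ), hmn⟩ : Fin n) = u := by ext; rfl
    rw [this, Function.update_self]

lemma update_true_of_lt {z : Fin n → Bool} {u : Fin n} (hu : (u : ℕ) < leadingOnes z) :
    Function.update z u true = z := by
  have : z u = true := lo_true hu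
  conv_lhs => rw [← this]
  exact Function.update_eq_self u z

lemma lo_update_fz {z : Fin n → Bool} (hM : leadingOnes z < n) :
    leadingOnes z < leadingOnes (Function.update z ⟨leadingOnes z, hM⟩ true) := by
  apply (mem_lo_iff _ ⟨leadingOnes z, hM⟩).mp
  intro j hj
  rcases lt_or_eq_of_le (show (j:ℕ) ≤ leadingOnes z from hj) with h' | h'
  · rw [Function.update_of_ne (by intro h; have := congrArg Fin.val h; simp at this; omega)]
    exact lo_true h'
  · have : j = ⟨leadingOnes z, hM⟩ := Fin.ext h'
    rw [this, Function.update_self]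

end EA

namespace EA

noncomputable def pexp {α : Type*} (p : PMF α) (f : α → ℝ≥0∞) : ℝ≥0∞ := ∑' a, p a * f a

lemma pexp_bind {α β : Type*} (p : PMF α) (m : α → PMF β) (f : β → ℝ≥0∞) :
    pexp (p.bind m) f = pexp p (fun a => pexp (m a) f) := by
  unfold pexp
  simp only [PMF.bind_apply]
  calc ∑' b, (∑' a, p a * (m a) b) * f b
      = ∑' b, ∑' a, p a * ((m a) b * f b) := by
        congr 1; funext b; rw [← ENNReal.tsum_mul_right]; congr 1; funext a; ring
    _ = ∑' a, ∑' b, p a * ((m a) b * f b) := ENNReal.tsum_comm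
    _ = ∑' a, p a * ∑' b, (m a) b * f b := by
        congr 1; funext a; rw [ENNReal.tsum_mul_left]

lemma pexp_pure {α : Type*} (a : α) (f : α → ℝ≥0∞) : pexp (PMF.pure a) f = f a := by
  unfold pexp
  simp only [PMF.pure_apply]
  rw [tsum_eq_single a (by intro b hb; simp [hb])]
  simp

lemma pexp_map {α β : Type*} (p : PMF α) (h : α → β) (f : β → ℝ≥0∞) :
    pexp (p.map h) f = pexp p (f ∘ h) := by
  rw [PMF.map, pexp_bind]
  congr 1; funext a
  show pexp (PMF.pure (h a)) f = _
  rw [pexp_pure]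
  rfl

lemma pexp_uniform {α : Type*} [Fintype α] [Nonempty α] (f : α → ℝ≥0∞) :
    pexp (PMF.uniformOfFintype α) f = (Fintype.card α : ℝ≥0∞)⁻¹ * ∑ a, f a := by
  unfold pexp
  simp only [PMF.uniformOfFintype_apply]
  rw [tsum_fintype, Finset.mul_sum]

lemma pexp_bernoulli (p : NNReal) (h : p ≤ 1) (f : Bool → ℝ≥0∞) :
    pexp (PMF.bernoulli p h) f = (1 - (p : ℝ≥0∞)) * f false + (p : ℝ≥0∞) * f true := by
  unfold pexp
  rw [tsum_bool]
  simp [PMF.bernoulli_apply]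

lemma pexp_mono_support {α : Type*} {p : PMF α} {f g : α → ℝ≥0∞}
    (h : ∀ a ∈ p.support, f a ≤ g a) : pexp p f ≤ pexp p g := by
  apply ENNReal.tsum_le_tsum
  intro a
  by_cases ha : p a = 0
  · simp [ha]
  · exact mul_le_mul_right (h a ha) _

lemma pexp_le_const {α : Type*} {p : PMF α} {f : α → ℝ≥0∞} {C : ℝ≥0∞}
    (h : ∀ a, f a ≤ C) : pexp p f ≤ C := by
  calc pexp p f ≤ pexp p (fun _ => C) := pexp_mono_support (fun a _ => h a)
    _ = C := by unfold pexp; rw [ENNReal.tsum_mul_right, PMF.tsum_coe, one_mul]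

lemma pexp_add {α : Type*} (p : PMF α) (f g : α → ℝ≥0∞) :
    pexp p (fun a => f a + g a) = pexp p f + pexp p g := by
  unfold pexp
  rw [← ENNReal.tsum_add]
  congr 1; funext a; ring

variable {n : ℕ} (hn : 0 < n) (q : ℝ) (hq0 : 0 ≤ q) (hq1 : q ≤ 1)

lemma pexp_noise (f : Option (Fin n) → ℝ≥0∞) :
    pexp (oneBitNoise n hn q hq1) f
      = (1 - ENNReal.ofReal q) * f none
        + ENNReal.ofReal q * ((n : ℝ≥0∞)⁻¹ * ∑ u, f (some u)) := by
  haveI : Nonempty (Fin n) := Fin.pos_iff_nonempty.mp hn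
  unfold oneBitNoise
  rw [pexp_bind, pexp_bernoulli]
  change (1 - ENNReal.ofReal q) * _ + ENNReal.ofReal q * _ = _
  congr 1
  · simp [pexp_pure]
  · congr 1
    simp only [if_pos]
    rw [pexp_map, pexp_uniform]
    simp [Function.comp]

lemma toOuterMeasure_eq_pexp (p : PMF (EAState n)) :
    p.toOuterMeasure {s : EAState n | s.2.2 = false}
      = pexp p (fun s => if s.2.2 = false then 1 else 0) := by
  rw [PMF.toOuterMeasure_apply]
  unfold pexp
  congr 1; funext s
  show _ = p s * (if s.2.2 = false then 1 else 0)
  by_cases h : s.2.2 = false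
  · rw [Set.indicator_of_mem (by exact h), if_pos h, mul_one]
  · rw [Set.indicator_of_notMem (by exact h), if_neg h, mul_zero]

end EA

namespace EA

section Main
variable {n : ℕ}

/-- transition function: deterministic next state given mutation bit and noise -/
def Tr (s : EAState n) (i : Fin n) (o : Option (Fin n)) : EAState n :=
  let y := Function.update s.1 i (!s.1 i)
  let fy := leadingOnes (applyOneFlip y o)
  (if s.2.1 ≤ fy then y else s.1, if s.2.1 ≤ fy then fy else s.2.1,
    s.2.2 || isOpt n (if s.2.1 ≤ fy then y else s.1) (if s.2.1 ≤ fy then fy else s.2.1))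

lemma eaStep_eq (hn : 0 < n) (q : ℝ) (hq1 : q ≤ 1) (s : EAState n) :
    eaStep n hn q hq1 s
      = haveI : Nonempty (Fin n) := Fin.pos_iff_nonempty.mp hn
        (PMF.uniformOfFintype (Fin n)).bind (fun i =>
          (oneBitNoise n hn q hq1).bind (fun o => PMF.pure (Tr s i o))) := rfl

noncomputable def dC (n : ℕ) (q : ℝ) : ℝ := n / (1 - q)
noncomputable def cC (n : ℕ) (q : ℝ) : ℝ := n * (1 + q) / (1 - q) ^ 2

noncomputable def G (q : ℝ) (s : EAState n) : ℝ :=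
  if s.2.2 then 0
  else if s.2.1 = leadingOnes s.1 then
    (if s.2.1 = n then 1 + dC n q else cC n q * ((n : ℝ) - s.2.1))
  else cC n q * ((n : ℝ) - s.2.1) + dC n q

def Inv (s : EAState n) : Prop := ∃ o, s.2.1 = leadingOnes (applyOneFlip s.1 o)

section Facts
variable {q : ℝ} (hq0 : 0 ≤ q) (hq1 : q < 1) (hn : 0 < n)

include hq1 in
lemma he_pos : (0:ℝ) < 1 - q := by linarith

include hq0 hq1 hn in
lemma dC_pos : (0:ℝ) < dC n q := by
  have := he_pos hq1
  have : (0:ℝ) < n := by exact_mod_cast hn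
  unfold dC
  positivity

include hq0 hq1 hn in
lemma dC_ge_n : (n : ℝ) ≤ dC n q := by
  have he := he_pos hq1
  rw [dC, le_div_iff₀ he]
  nlinarith [show (0:ℝ) < n by exact_mod_cast hn]

include hq0 hq1 hn in
lemma dC_le_cC : dC n q ≤ cC n q := by
  have he := he_pos hq1
  rw [dC, cC, div_le_div_iff₀ he (by positivity)]
  nlinarith [show (0:ℝ) < n by exact_mod_cast hn, mul_nonneg hq0 he.le,
    mul_nonneg (mul_nonneg hq0 he.le) (show (0:ℝ) ≤ n by positivity)]

include hq0 hq1 hn in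
lemma cC_pos : (0:ℝ) < cC n q := lt_of_lt_of_le (dC_pos hq0 hq1 hn) (dC_le_cC hq0 hq1 hn)

include hq1 in
lemma dC_eq : dC n q * (1 - q) = n := by
  have he := he_pos hq1
  unfold dC
  field_simp

include hq1 in
lemma cC_eq : cC n q * (1 - q) = dC n q * (1 + q) := by
  have he := he_pos hq1
  unfold cC dC
  field_simp

end Facts

lemma isOpt_iff (x : Fin n → Bool) (f : ℕ) :
    isOpt n x f = true ↔ (∀ j, x j = true) ∧ f = n := by
  simp [isOpt]

lemma isOpt_false_of_ne_lo {x : Fin n → Bool} {f : ℕ} (h : f ≠ leadingOnes x) :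
    isOpt n x f = false := by
  rw [Bool.eq_false_iff]
  intro hc
  obtain ⟨hall, hfn⟩ := (isOpt_iff x f).mp hc
  exact h (by rw [hfn, lo_eq_n hall])

lemma isOpt_false_of_ne_n {x : Fin n → Bool} {f : ℕ} (h : f ≠ n) :
    isOpt n x f = false := by
  rw [Bool.eq_false_iff]
  intro hc
  exact h ((isOpt_iff x f).mp hc).2

lemma G_flag {q : ℝ} {s : EAState n} (h : s.2.2 = true) : G q s = 0 := by
  rw [G, if_pos (by rw [h])]

lemma G_ne {q : ℝ} (x : Fin n → Bool) (f : ℕ) (h : f ≠ leadingOnes x) :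
    G q ((x, f, false) : EAState n) = cC n q * ((n : ℝ) - f) + dC n q := by
  rw [G]
  simp only [Bool.false_eq_true, if_false]
  rw [if_neg h]

lemma G_corr {q : ℝ} (x : Fin n → Bool) (f : ℕ) (h : f = leadingOnes x) (h2 : f ≠ n) :
    G q ((x, f, false) : EAState n) = cC n q * ((n : ℝ) - f) := by
  rw [G]
  simp only [Bool.false_eq_true, if_false]
  rw [if_pos h, if_neg h2]

lemma G_sp {q : ℝ} (x : Fin n → Bool) (h : (n:ℕ) = leadingOnes x) :
    G q ((x, n, false) : EAState n) = 1 + dC n q := by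
  rw [G]
  simp only [Bool.false_eq_true, if_false]
  rw [if_pos h]
  simp

variable {q : ℝ}

lemma G_nonneg (hq0 : 0 ≤ q) (hq1 : q < 1) (hn : 0 < n) {s : EAState n} (hf : s.2.1 ≤ n) :
    0 ≤ G q s := by
  have hd := dC_pos hq0 hq1 hn
  have hc := cC_pos hq0 hq1 hn
  have hfr : (s.2.1 : ℝ) ≤ n := by exact_mod_cast hf
  rw [G]
  split
  · exact le_refl 0
  · split
    · split
      · linarith
      · nlinarith
    · nlinarith

lemma Tr_acc {s : EAState n} {i : Fin n} {o : Option (Fin n)}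
    (h : s.2.1 ≤ leadingOnes (applyOneFlip (Function.update s.1 i (!s.1 i)) o)) :
    Tr s i o = (Function.update s.1 i (!s.1 i),
      leadingOnes (applyOneFlip (Function.update s.1 i (!s.1 i)) o),
      s.2.2 || isOpt n (Function.update s.1 i (!s.1 i))
        (leadingOnes (applyOneFlip (Function.update s.1 i (!s.1 i)) o))) := by
  simp only [Tr, if_pos h]

lemma Tr_rej {s : EAState n} {i : Fin n} {o : Option (Fin n)}
    (h : ¬ s.2.1 ≤ leadingOnes (applyOneFlip (Function.update s.1 i (!s.1 i)) o)) :
    Tr s i o = (s.1, s.2.1, s.2.2 || isOpt n s.1 s.2.1) := by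
  simp only [Tr, if_neg h]

lemma Tr_flag {s : EAState n} (h : s.2.2 = true) (i : Fin n) (o : Option (Fin n)) :
    (Tr s i o).2.2 = true := by
  simp only [Tr, h, Bool.true_or]

lemma Tr_snd_le {s : EAState n} (h : s.2.1 ≤ n) (i : Fin n) (o : Option (Fin n)) :
    (Tr s i o).2.1 ≤ n := by
  by_cases hacc : s.2.1 ≤ leadingOnes (applyOneFlip (Function.update s.1 i (!s.1 i)) o)
  · rw [Tr_acc hacc]
    exact lo_le _
  · rw [Tr_rej hacc]
    exact h

lemma Tr_inv {s : EAState n} (h : Inv s) (i : Fin n) (o : Option (Fin n)) :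
    Inv (Tr s i o) := by
  by_cases hacc : s.2.1 ≤ leadingOnes (applyOneFlip (Function.update s.1 i (!s.1 i)) o)
  · rw [Tr_acc hacc]
    exact ⟨o, rfl⟩
  · rw [Tr_rej hacc]
    exact h

lemma inv_le_n {s : EAState n} (h : Inv s) : s.2.1 ≤ n := by
  obtain ⟨o, ho⟩ := h
  rw [ho]
  exact lo_le _

/-- the three mutation cases -/
lemma lo_mut_lt {x : Fin n → Bool} {i : Fin n} (h : (i : ℕ) < leadingOnes x) :
    leadingOnes (Function.update x i (!x i)) = (i : ℕ) := by
  rw [lo_true h]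
  exact lo_update_false h

lemma lo_mut_gt {x : Fin n → Bool} {i : Fin n} (h : leadingOnes x < (i : ℕ)) :
    leadingOnes (Function.update x i (!x i)) = leadingOnes x :=
  lo_update_gt h _

lemma lo_mut_eq {x : Fin n → Bool} {i : Fin n} (h : (i : ℕ) = leadingOnes x) :
    leadingOnes x < leadingOnes (Function.update x i (!x i)) := by
  have hL : leadingOnes x < n := h ▸ i.isLt
  have hi : i = ⟨leadingOnes x, hL⟩ := Fin.ext h
  rw [hi, lo_false hL]
  exact lo_update_fz hL

lemma mut_restore (x : Fin n → Bool) (i : Fin n) :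
    Function.update (Function.update x i (!x i)) i
      (!(Function.update x i (!x i) i)) = x := by
  rw [Function.update_self, Bool.not_not, Function.update_idem, Function.update_eq_self]

lemma mut_ne (x : Fin n → Bool) (i u : Fin n) (h : u ≠ i) :
    Function.update x i (!x i) u = x u :=
  Function.update_of_ne h _ _

/-- weighted one-step cost -/
noncomputable def Wr (q : ℝ) (s : EAState n) (i : Fin n) : ℝ :=
  (1 - q) * G q (Tr s i none) + q * ((n : ℝ)⁻¹ * ∑ u : Fin n, G q (Tr s i (some u)))

section StepFormula
variable (hn : 0 < n) (hq0 : 0 ≤ q) (hq1 : q < 1)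

include hn hq0 hq1 in
lemma ninv_eq : ((n : ℕ) : ℝ≥0∞)⁻¹ = ENNReal.ofReal ((n : ℝ)⁻¹) := by
  rw [ENNReal.ofReal_inv_of_pos (by exact_mod_cast hn), ENNReal.ofReal_natCast]

include hn hq0 hq1 in
lemma comb_eq (a : ℝ) (ha : 0 ≤ a) (b : Fin n → ℝ) (hb : ∀ u, 0 ≤ b u) :
    (1 - ENNReal.ofReal q) * ENNReal.ofReal a
      + ENNReal.ofReal q * (((n : ℕ) : ℝ≥0∞)⁻¹ * ∑ u, ENNReal.ofReal (b u))
    = ENNReal.ofReal ((1 - q) * a + q * ((n : ℝ)⁻¹ * ∑ u, b u)) := by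
  have h1 : (1 : ℝ≥0∞) - ENNReal.ofReal q = ENNReal.ofReal (1 - q) := by
    rw [ENNReal.ofReal_sub _ hq0, ENNReal.ofReal_one]
  have hsum : (0:ℝ) ≤ ∑ u : Fin n, b u := Finset.sum_nonneg (fun u _ => hb u)
  have hni : (0:ℝ) ≤ (n : ℝ)⁻¹ := by positivity
  rw [h1, ninv_eq hn hq0 hq1,
    ← ENNReal.ofReal_sum_of_nonneg (fun u _ => hb u),
    ← ENNReal.ofReal_mul hni,
    ← ENNReal.ofReal_mul hq0,
    ← ENNReal.ofReal_mul (show (0:ℝ) ≤ 1 - q by linarith),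
    ← ENNReal.ofReal_add (mul_nonneg (by linarith) ha)
      (mul_nonneg hq0 (mul_nonneg hni hsum))]

include hn hq0 hq1 in
lemma pexp_step_eq {s : EAState n} (hf : s.2.1 ≤ n) :
    pexp (eaStep n hn q hq1.le s) (fun s' => ENNReal.ofReal (G q s'))
      = ENNReal.ofReal ((n : ℝ)⁻¹ * ∑ i, Wr q s i) := by
  haveI : Nonempty (Fin n) := Fin.pos_iff_nonempty.mp hn
  have hGnn : ∀ i o, 0 ≤ G q (Tr s i o) :=
    fun i o => G_nonneg hq0 hq1 hn (Tr_snd_le hf i o)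
  rw [eaStep_eq, pexp_bind]
  have hinner : ∀ i : Fin n,
      pexp ((oneBitNoise n hn q hq1.le).bind (fun o => PMF.pure (Tr s i o)))
        (fun s' => ENNReal.ofReal (G q s')) = ENNReal.ofReal (Wr q s i) := by
    intro i
    rw [pexp_bind]
    have hpp : ∀ o, pexp (PMF.pure (Tr s i o)) (fun s' => ENNReal.ofReal (G q s'))
        = ENNReal.ofReal (G q (Tr s i o)) := fun o => pexp_pure _ _
    simp only [hpp]
    rw [pexp_noise hn q hq1.le]
    rw [comb_eq hn hq0 hq1 _ (hGnn i none) _ (fun u => hGnn i (some u))]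
    rfl
  simp only [hinner]
  rw [pexp_uniform]
  rw [← ENNReal.ofReal_sum_of_nonneg (fun i _ => ?_), Fintype.card_fin,
    ninv_eq hn hq0 hq1, ← ENNReal.ofReal_mul (by positivity)]
  · unfold Wr
    have h1 : (0:ℝ) ≤ (n : ℝ)⁻¹ := by positivity
    have h2 : (0:ℝ) ≤ ∑ u : Fin n, G q (Tr s i (some u)) :=
      Finset.sum_nonneg (fun u _ => hGnn i (some u))
    have h3 : (0:ℝ) ≤ 1 - q := by linarith
    exact add_nonneg (mul_nonneg h3 (hGnn i none)) (mul_nonneg hq0 (mul_nonneg h1 h2))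

include hn hq0 hq1 in
lemma pexp_step_flag {s : EAState n} (hflag : s.2.2 = true) :
    pexp (eaStep n hn q hq1.le s) (fun s' => ENNReal.ofReal (G q s')) = 0 := by
  haveI : Nonempty (Fin n) := Fin.pos_iff_nonempty.mp hn
  refine le_antisymm ?_ zero_le
  rw [eaStep_eq, pexp_bind]
  apply pexp_le_const
  intro i
  rw [pexp_bind]
  apply pexp_le_const
  intro o
  rw [pexp_pure]
  simp [G_flag (Tr_flag hflag i o)]

end StepFormula

section Classes
variable (hq0 : 0 ≤ q) (hq1 : q < 1) (hn : 0 < n)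

include hq0 hq1 hn in
lemma G_acc_le (y : Fin n → Bool) (fy : ℕ) (hfy : fy ≤ n) :
    G q ((y, fy, false || isOpt n y fy) : EAState n)
      ≤ cC n q * ((n : ℝ) - fy) + dC n q := by
  have hd := dC_pos hq0 hq1 hn
  have hc := cC_pos hq0 hq1 hn
  have hfr : (fy : ℝ) ≤ n := by exact_mod_cast hfy
  rw [Bool.false_or]
  rcases hOpt : isOpt n y fy with _ | _
  · by_cases hlo : fy = leadingOnes y
    · by_cases hfn : fy = n
      · exfalso
        have : isOpt n y fy = true :=
          (isOpt_iff y fy).mpr ⟨all_true_of_lo (by omega), hfn⟩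
        rw [hOpt] at this; exact Bool.false_ne_true this
      · rw [G_corr _ _ hlo hfn]; nlinarith
    · rw [G_ne _ _ hlo]
  · rw [G_flag rfl]; nlinarith

include hq0 hq1 hn in
lemma G_acc_le' (y : Fin n → Bool) (fy : ℕ) (hfy : fy = leadingOnes y) :
    G q ((y, fy, false || isOpt n y fy) : EAState n) ≤ cC n q * ((n : ℝ) - fy) := by
  have hc := cC_pos hq0 hq1 hn
  have hfr : (fy : ℝ) ≤ n := by exact_mod_cast (hfy ▸ lo_le y)
  rw [Bool.false_or]
  rcases hOpt : isOpt n y fy with _ | _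
  · by_cases hfn : fy = n
    · exfalso
      have : isOpt n y fy = true :=
        (isOpt_iff y fy).mpr ⟨all_true_of_lo (by omega), hfn⟩
      rw [hOpt] at this; exact Bool.false_ne_true this
    · rw [G_corr _ _ hfy hfn]
  · rw [G_flag rfl]; nlinarith

lemma GT_rej (x : Fin n → Bool) (f : ℕ) (hOpt : isOpt n x f = false) {i : Fin n}
    {o : Option (Fin n)}
    (hacc : ¬ f ≤ leadingOnes (applyOneFlip (Function.update x i (!x i)) o)) :
    G q (Tr ((x, f, false) : EAState n) i o) = G q ((x, f, false) : EAState n) := by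
  rw [Tr_rej hacc, hOpt]
  rfl

include hq0 hq1 hn in
lemma GT_le_ne (x : Fin n → Bool) (f : ℕ) (hne : f ≠ leadingOnes x) (hfn : f ≤ n)
    (i : Fin n) (o : Option (Fin n)) :
    G q (Tr ((x, f, false) : EAState n) i o) ≤ G q ((x, f, false) : EAState n) := by
  by_cases hacc : f ≤ leadingOnes (applyOneFlip (Function.update x i (!x i)) o)
  · rw [Tr_acc hacc, G_ne x f hne]
    refine le_trans (G_acc_le hq0 hq1 hn _ _ (lo_le _)) ?_
    have hc := cC_pos hq0 hq1 hn
    have hcast : (f : ℝ) ≤ (leadingOnes (applyOneFlip (Function.update x i (!x i)) o) : ℝ) := by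
      exact_mod_cast hacc
    nlinarith
  · rw [GT_rej x f (isOpt_false_of_ne_lo hne) hacc]

include hq0 hq1 hn in
lemma GT_none_sp (x : Fin n → Bool) (f : ℕ) (i : Fin n)
    (hsp : f ≤ leadingOnes (Function.update x i (!x i))) :
    G q (Tr ((x, f, false) : EAState n) i none) ≤ cC n q * ((n : ℝ) - f) := by
  have hacc : f ≤ leadingOnes (applyOneFlip (Function.update x i (!x i)) none) := hsp
  rw [Tr_acc hacc]
  refine le_trans (G_acc_le' hq0 hq1 hn _ _ rfl) ?_
  have hc := cC_pos hq0 hq1 hn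
  have hcast : (f : ℝ) ≤ (leadingOnes (applyOneFlip (Function.update x i (!x i)) none) : ℝ) := by
    exact_mod_cast hacc
  nlinarith

include hq0 hq1 hn in
lemma Wr_le2 (s : EAState n) (i : Fin n) (a gb : ℝ)
    (h1 : G q (Tr s i none) ≤ a) (h2 : ∀ u, G q (Tr s i (some u)) ≤ gb) :
    Wr q s i ≤ (1 - q) * a + q * gb := by
  have hnR : (0:ℝ) < n := by exact_mod_cast hn
  have h3 : (n : ℝ)⁻¹ * ∑ u : Fin n, G q (Tr s i (some u)) ≤ gb := by
    have hs : ∑ u : Fin n, G q (Tr s i (some u)) ≤ (n : ℝ) * gb := by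
      calc ∑ u : Fin n, G q (Tr s i (some u)) ≤ ∑ _u : Fin n, gb :=
            Finset.sum_le_sum (fun u _ => h2 u)
        _ = (n : ℝ) * gb := by
            rw [Finset.sum_const, Finset.card_univ, Fintype.card_fin, nsmul_eq_mul]
    calc (n : ℝ)⁻¹ * ∑ u : Fin n, G q (Tr s i (some u))
        ≤ (n : ℝ)⁻¹ * ((n : ℝ) * gb) := by
          apply mul_le_mul_of_nonneg_left hs (by positivity)
      _ = gb := by field_simp
  exact add_le_add (mul_le_mul_of_nonneg_left h1 (by linarith))
    (mul_le_mul_of_nonneg_left h3 hq0)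

include hq0 hq1 hn in
lemma Wr_le3 (s : EAState n) (i : Fin n) (a gb ex : ℝ) (u₀ : Fin n)
    (h1 : G q (Tr s i none) ≤ a) (h2 : ∀ u, u ≠ u₀ → G q (Tr s i (some u)) ≤ gb)
    (h2' : G q (Tr s i (some u₀)) ≤ gb + ex) :
    Wr q s i ≤ (1 - q) * a + q * (gb + ex * (n : ℝ)⁻¹) := by
  have hnR : (0:ℝ) < n := by exact_mod_cast hn
  have h3 : (n : ℝ)⁻¹ * ∑ u : Fin n, G q (Tr s i (some u)) ≤ gb + ex * (n : ℝ)⁻¹ := by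
    have hs : ∑ u : Fin n, G q (Tr s i (some u)) ≤ (n : ℝ) * gb + ex := by
      calc ∑ u : Fin n, G q (Tr s i (some u))
          ≤ ∑ u : Fin n, (gb + if u = u₀ then ex else 0) := by
            apply Finset.sum_le_sum
            intro u _
            by_cases hu : u = u₀
            · rw [if_pos hu, hu]; exact h2'
            · rw [if_neg hu]; simpa using h2 u hu
        _ = (n : ℝ) * gb + ex := by
            rw [Finset.sum_add_distrib, Finset.sum_const, Finset.card_univ,
              Fintype.card_fin, nsmul_eq_mul, Finset.sum_ite_eq' Finset.univ u₀]
            simp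
    calc (n : ℝ)⁻¹ * ∑ u : Fin n, G q (Tr s i (some u))
        ≤ (n : ℝ)⁻¹ * ((n : ℝ) * gb + ex) := by
          apply mul_le_mul_of_nonneg_left hs (by positivity)
      _ = gb + ex * (n : ℝ)⁻¹ := by field_simp
  exact add_le_add (mul_le_mul_of_nonneg_left h1 (by linarith))
    (mul_le_mul_of_nonneg_left h3 hq0)

include hq0 hq1 hn in
lemma key_ne (x : Fin n → Bool) (f : ℕ) (hne : f ≠ leadingOnes x) (hfn : f ≤ n)
    (i₀ : Fin n) (hsp : f ≤ leadingOnes (Function.update x i₀ (!x i₀))) :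
    (n : ℝ)⁻¹ * ∑ i, Wr q ((x, f, false) : EAState n) i + 1
      ≤ G q ((x, f, false) : EAState n) := by
  have hnR : (0:ℝ) < n := by exact_mod_cast hn
  have hg : G q ((x, f, false) : EAState n) = cC n q * ((n : ℝ) - f) + dC n q := G_ne x f hne
  set g0 : ℝ := cC n q * ((n : ℝ) - f) + dC n q with hg0
  have hB : ∀ i : Fin n, Wr q ((x, f, false) : EAState n) i
      ≤ g0 + (if i = i₀ then -((1 - q) * dC n q) else 0) := by
    intro i
    by_cases hi : i = i₀
    · subst hi
      rw [if_pos rfl]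
      have h1 := GT_none_sp hq0 hq1 hn x f i hsp
      have h2 : ∀ u, G q (Tr ((x, f, false) : EAState n) i (some u)) ≤ g0 :=
        fun u => hg ▸ GT_le_ne hq0 hq1 hn x f hne hfn i (some u)
      refine le_trans (Wr_le2 hq0 hq1 hn _ i (cC n q * ((n:ℝ) - f)) g0 h1 h2) ?_
      rw [hg0]; ring_nf; nlinarith [dC_pos hq0 hq1 hn]
    · rw [if_neg hi]
      have h1 : G q (Tr ((x, f, false) : EAState n) i none) ≤ g0 :=
        hg ▸ GT_le_ne hq0 hq1 hn x f hne hfn i none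
      have h2 : ∀ u, G q (Tr ((x, f, false) : EAState n) i (some u)) ≤ g0 :=
        fun u => hg ▸ GT_le_ne hq0 hq1 hn x f hne hfn i (some u)
      refine le_trans (Wr_le2 hq0 hq1 hn _ i g0 g0 h1 h2) ?_
      simp; nlinarith [dC_pos hq0 hq1 hn]
  have hsum : ∑ i, Wr q ((x, f, false) : EAState n) i ≤ (n : ℝ) * g0 - (1 - q) * dC n q := by
    calc ∑ i, Wr q ((x, f, false) : EAState n) i
        ≤ ∑ i : Fin n, (g0 + (if i = i₀ then -((1 - q) * dC n q) else 0)) :=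
          Finset.sum_le_sum (fun i _ => hB i)
      _ = (n : ℝ) * g0 - (1 - q) * dC n q := by
          rw [Finset.sum_add_distrib, Finset.sum_const, Finset.card_univ,
            Fintype.card_fin, nsmul_eq_mul, Finset.sum_ite_eq' Finset.univ i₀]
          simp; ring
  have hdeq := dC_eq (n := n) hq1
  calc (n : ℝ)⁻¹ * ∑ i, Wr q ((x, f, false) : EAState n) i + 1
      ≤ (n : ℝ)⁻¹ * ((n : ℝ) * g0 - (1 - q) * dC n q) + 1 := by
        have := mul_le_mul_of_nonneg_left hsum (show (0:ℝ) ≤ (n:ℝ)⁻¹ by positivity)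
        linarith
    _ = g0 - (n : ℝ)⁻¹ * ((1-q) * dC n q) + 1 := by field_simp
    _ ≤ g0 := by
        have h4 : (1 - q) * dC n q = (n : ℝ) := by linarith [hdeq]
        rw [h4]
        have : (n:ℝ)⁻¹ * (n:ℝ) = 1 := by field_simp
        linarith
    _ = G q ((x, f, false) : EAState n) := hg.symm

end Classes

lemma applyOneFlip_some (x : Fin n → Bool) (u : Fin n) :
    applyOneFlip x (some u) = Function.update x u (!x u) := rfl

lemma applyOneFlip_none (x : Fin n → Bool) : applyOneFlip x none = x := rfl

section Classes2
variable (hq0 : 0 ≤ q) (hq1 : q < 1) (hn : 0 < n)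

include hq0 hq1 hn in
lemma key_under (x : Fin n → Bool) (f : ℕ) (hf : f < leadingOnes x) :
    (n : ℝ)⁻¹ * ∑ i, Wr q ((x, f, false) : EAState n) i + 1
      ≤ G q ((x, f, false) : EAState n) := by
  have hLn : leadingOnes x ≤ n := lo_le x
  have hn1 : 1 ≤ n := hn
  refine key_ne hq0 hq1 hn x f (by omega) (by omega) ⟨n - 1, by omega⟩ ?_
  set i₀ : Fin n := ⟨n - 1, by omega⟩ with hi₀
  have hi₀v : (i₀ : ℕ) = n - 1 := rfl
  rcases lt_trichotomy ((i₀ : ℕ)) (leadingOnes x) with h | h | h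
  · rw [lo_mut_lt h]; omega
  · have := lo_mut_eq h; omega
  · rw [lo_mut_gt h]; omega

include hq0 hq1 hn in
lemma key_over (x : Fin n → Bool) (f : ℕ)
    (hinv : ∃ o, f = leadingOnes (applyOneFlip x o)) (hf : leadingOnes x < f) :
    (n : ℝ)⁻¹ * ∑ i, Wr q ((x, f, false) : EAState n) i + 1
      ≤ G q ((x, f, false) : EAState n) := by
  have hfn : f ≤ n := by obtain ⟨o, ho⟩ := hinv; rw [ho]; exact lo_le _
  obtain ⟨hL, hfe⟩ : ∃ hL : leadingOnes x < n,
      f = leadingOnes (Function.update x ⟨leadingOnes x, hL⟩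
        (!x ⟨leadingOnes x, hL⟩)) := by
    obtain ⟨o, ho⟩ := hinv
    cases o with
    | none =>
      rw [applyOneFlip_none] at ho; omega
    | some u =>
      rw [applyOneFlip_some] at ho
      rcases lt_trichotomy ((u : ℕ)) (leadingOnes x) with h | h | h
      · rw [lo_mut_lt h] at ho; omega
      · have hL : leadingOnes x < n := h ▸ u.isLt
        refine ⟨hL, ?_⟩
        have hu : u = ⟨leadingOnes x, hL⟩ := Fin.ext h
        rw [← hu]; exact ho
      · rw [lo_mut_gt h] at ho; omega
  exact key_ne hq0 hq1 hn x f (by omega) hfn ⟨leadingOnes x, hL⟩ (le_of_eq hfe)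

include hq0 hq1 hn in
lemma key_corr (x : Fin n → Bool) (f : ℕ) (hf : f = leadingOnes x) (hfn : f < n) :
    (n : ℝ)⁻¹ * ∑ i, Wr q ((x, f, false) : EAState n) i + 1
      ≤ G q ((x, f, false) : EAState n) := by
  have hnR : (0:ℝ) < n := by exact_mod_cast hn
  have hd := dC_pos hq0 hq1 hn
  have hc := cC_pos hq0 hq1 hn
  have hdc := dC_le_cC hq0 hq1 hn
  have hdn := dC_ge_n hq0 hq1 hn
  have hdeq := dC_eq (n := n) hq1
  have hceq := cC_eq (n := n) hq1
  have hfr : (f : ℝ) ≤ n := by exact_mod_cast (le_of_lt hfn)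
  have hg : G q ((x, f, false) : EAState n) = cC n q * ((n : ℝ) - f) :=
    G_corr x f hf (by omega)
  have hOpt : isOpt n x f = false := isOpt_false_of_ne_n (by omega)
  set i₀ : Fin n := ⟨f, hfn⟩ with hi₀
  set gb : ℝ := cC n q * ((n : ℝ) - f) with hgb
  -- bounds for o = none
  have hA : ∀ i : Fin n, G q (Tr ((x, f, false) : EAState n) i none)
      ≤ (if i = i₀ then gb - cC n q else gb) := by
    intro i
    rcases lt_trichotomy ((i : ℕ)) (leadingOnes x) with h | h | h
    · -- mutation destroys a leading one; offspring undervalued and rejected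
      have hii₀ : i ≠ i₀ := by
        intro hii; rw [hii] at h; simp only [hi₀] at h; omega
      rw [if_neg hii₀]
      have hfy : leadingOnes (applyOneFlip (Function.update x i (!x i)) none) = (i : ℕ) := by
        rw [applyOneFlip_none]; exact lo_mut_lt h
      have hacc : ¬ f ≤ leadingOnes (applyOneFlip (Function.update x i (!x i)) none) := by
        rw [hfy]; omega
      rw [GT_rej x f hOpt hacc, hg]
    · -- flipping the first zero: improvement
      have hii₀ : i = i₀ := Fin.ext (by rw [hi₀]; simp; omega)
      rw [if_pos hii₀]
      have hlt := lo_mut_eq h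
      have hacc : f ≤ leadingOnes (applyOneFlip (Function.update x i (!x i)) none) := by
        rw [applyOneFlip_none]; omega
      rw [Tr_acc hacc]
      refine le_trans (G_acc_le' hq0 hq1 hn _ _ rfl) ?_
      have hge : (f : ℝ) + 1 ≤
          (leadingOnes (applyOneFlip (Function.update x i (!x i)) none) : ℝ) := by
        rw [applyOneFlip_none]
        have : f + 1 ≤ leadingOnes (Function.update x i (!x i)) := by omega
        exact_mod_cast this
      rw [hgb]; nlinarith
    · -- tail mutation, same fitness, accepted
      have hii₀ : i ≠ i₀ := by
        intro hii; rw [hii] at h; simp only [hi₀] at h; omega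
      rw [if_neg hii₀]
      have hfy : leadingOnes (applyOneFlip (Function.update x i (!x i)) none)
          = leadingOnes x := by
        rw [applyOneFlip_none]; exact lo_mut_gt h
      have hacc : f ≤ leadingOnes (applyOneFlip (Function.update x i (!x i)) none) := by
        rw [hfy]; omega
      rw [Tr_acc hacc]
      refine le_trans (G_acc_le' hq0 hq1 hn _ _ rfl) ?_
      rw [hfy, ← hf, hgb]
  -- bounds for o = some u, u ≠ i
  have hU : ∀ i u : Fin n, u ≠ i →
      G q (Tr ((x, f, false) : EAState n) i (some u)) ≤ gb := by
    intro i u hune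
    have huvi : (u : ℕ) ≠ (i : ℕ) := fun h => hune (Fin.ext h)
    rcases lt_trichotomy ((i : ℕ)) (leadingOnes x) with h | h | h
    · -- i < L : offspring has value i, all double flips rejected
      have hyL : leadingOnes (Function.update x i (!x i)) = (i : ℕ) := lo_mut_lt h
      rcases lt_or_gt_of_ne huvi with hui | hui
      · -- u < i : evaluated value u < f
        have hyu : Function.update x i (!x i) u = true := by
          rw [mut_ne x i u hune]
          exact lo_true (by omega)
        have hfy : leadingOnes (applyOneFlip (Function.update x i (!x i)) (some u))
            = (u : ℕ) := by
          rw [applyOneFlip_some, hyu]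
          exact lo_update_false (by omega)
        have hacc : ¬ f ≤ leadingOnes (applyOneFlip (Function.update x i (!x i)) (some u)) := by
          rw [hfy]; omega
        rw [GT_rej x f hOpt hacc, hg]
      · -- u > i
        have hfy : leadingOnes (applyOneFlip (Function.update x i (!x i)) (some u))
            = (i : ℕ) := by
          rw [applyOneFlip_some]
          rw [lo_update_gt (by omega) _]
          exact hyL
        have hacc : ¬ f ≤ leadingOnes (applyOneFlip (Function.update x i (!x i)) (some u)) := by
          rw [hfy]; omega
        rw [GT_rej x f hOpt hacc, hg]
    · -- i is the first zero
      have hL1 := lo_mut_eq h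
      set y := Function.update x i (!x i) with hy
      rcases lt_trichotomy ((u : ℕ)) (leadingOnes y) with hu | hu | hu
      · -- u below the offspring's first zero : value u
        have hyu : y u = true := lo_true hu
        have hfy : leadingOnes (applyOneFlip y (some u)) = (u : ℕ) := by
          rw [applyOneFlip_some, hyu]
          exact lo_update_false hu
        by_cases huf : f ≤ (u : ℕ)
        · have hacc : f ≤ leadingOnes (applyOneFlip y (some u)) := by rw [hfy]; omega
          rw [Tr_acc hacc]
          refine le_trans (G_acc_le hq0 hq1 hn _ _ (by rw [hfy]; omega)) ?_
          have hu1 : (f : ℝ) + 1 ≤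
              (leadingOnes (applyOneFlip y (some u)) : ℝ) := by
            have : f + 1 ≤ leadingOnes (applyOneFlip y (some u)) := by
              rw [hfy]; omega
            exact_mod_cast this
          rw [hgb]; nlinarith
        · have hacc : ¬ f ≤ leadingOnes (applyOneFlip y (some u)) := by rw [hfy]; omega
          rw [GT_rej x f hOpt hacc, hg]
      · -- u is the offspring's first zero : double raise
        have hlt2 := lo_mut_eq hu
        have hacc : f ≤ leadingOnes (applyOneFlip y (some u)) := by
          rw [applyOneFlip_some]; omega
        rw [Tr_acc hacc]
        refine le_trans (G_acc_le hq0 hq1 hn _ _ (lo_le _)) ?_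
        have hu2 : (f : ℝ) + 2 ≤ (leadingOnes (applyOneFlip y (some u)) : ℝ) := by
          have : f + 2 ≤ leadingOnes (applyOneFlip y (some u)) := by
            rw [applyOneFlip_some]; omega
          exact_mod_cast this
        rw [hgb]; nlinarith
      · -- u beyond the offspring's first zero : value L1 accepted
        have hfy : leadingOnes (applyOneFlip y (some u)) = leadingOnes y := by
          rw [applyOneFlip_some]
          exact lo_update_gt hu _
        have hacc : f ≤ leadingOnes (applyOneFlip y (some u)) := by rw [hfy]; omega
        rw [Tr_acc hacc]
        refine le_trans (G_acc_le' hq0 hq1 hn _ _ hfy) ?_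
        have hu1 : (f : ℝ) ≤ (leadingOnes (applyOneFlip y (some u)) : ℝ) := by
          exact_mod_cast hacc
        rw [hgb]; nlinarith
    · -- i beyond the first zero : offspring keeps value L
      have hyL : leadingOnes (Function.update x i (!x i)) = leadingOnes x := lo_mut_gt h
      set y := Function.update x i (!x i) with hy
      rcases lt_trichotomy ((u : ℕ)) (leadingOnes x) with hu | hu | hu
      · -- u a leading one of y
        have hyu : y u = true := by
          rw [hy, mut_ne x i u (by intro hh; rw [hh] at hu; omega)]
          exact lo_true hu
        have hfy : leadingOnes (applyOneFlip y (some u)) = (u : ℕ) := by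
          rw [applyOneFlip_some, hyu]
          exact lo_update_false (by omega)
        have hacc : ¬ f ≤ leadingOnes (applyOneFlip y (some u)) := by rw [hfy]; omega
        rw [GT_rej x f hOpt hacc, hg]
      · -- u is the first zero of y : raise
        have hlt2 := lo_mut_eq (show (u : ℕ) = leadingOnes y by omega)
        have hacc : f ≤ leadingOnes (applyOneFlip y (some u)) := by
          rw [applyOneFlip_some]; omega
        rw [Tr_acc hacc]
        refine le_trans (G_acc_le hq0 hq1 hn _ _ (lo_le _)) ?_
        have hu2 : (f : ℝ) + 1 ≤ (leadingOnes (applyOneFlip y (some u)) : ℝ) := by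
          have : f + 1 ≤ leadingOnes (applyOneFlip y (some u)) := by
            rw [applyOneFlip_some]; omega
          exact_mod_cast this
        rw [hgb]; nlinarith
      · -- u beyond the first zero of y
        have hfy : leadingOnes (applyOneFlip y (some u)) = leadingOnes y := by
          rw [applyOneFlip_some]
          exact lo_update_gt (by omega) _
        have hacc : f ≤ leadingOnes (applyOneFlip y (some u)) := by
          rw [hfy]; omega
        rw [Tr_acc hacc]
        refine le_trans (G_acc_le' hq0 hq1 hn _ _ hfy) ?_
        have hfyf : leadingOnes (applyOneFlip y (some u)) = f := by omega
        rw [hfyf, hgb]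
  -- bounds for the restore flip u = i
  have hUi : ∀ i : Fin n, G q (Tr ((x, f, false) : EAState n) i (some i)) ≤ gb + dC n q := by
    intro i
    have hres : applyOneFlip (Function.update x i (!x i)) (some i) = x := by
      rw [applyOneFlip_some]
      exact mut_restore x i
    have hacc : f ≤ leadingOnes (applyOneFlip (Function.update x i (!x i)) (some i)) := by
      rw [hres]; omega
    rw [Tr_acc hacc]
    refine le_trans (G_acc_le hq0 hq1 hn _ _ (by rw [hres]; omega)) ?_
    have hfyf : leadingOnes (applyOneFlip (Function.update x i (!x i)) (some i)) = f := by
      rw [hres, hf]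
    rw [hfyf, hgb]
  -- assemble
  have hW : ∀ i : Fin n, Wr q ((x, f, false) : EAState n) i
      ≤ (1 - q) * (if i = i₀ then gb - cC n q else gb) + q * (gb + dC n q * (n : ℝ)⁻¹) :=
    fun i => Wr_le3 hq0 hq1 hn _ i _ gb (dC n q) i (hA i) (fun u hu => hU i u hu) (hUi i)
  have hsum : ∑ i, Wr q ((x, f, false) : EAState n) i
      ≤ (n : ℝ) * gb - (1 - q) * cC n q + q * dC n q := by
    calc ∑ i, Wr q ((x, f, false) : EAState n) i
        ≤ ∑ i : Fin n, ((1 - q) * (if i = i₀ then gb - cC n q else gb)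
            + q * (gb + dC n q * (n : ℝ)⁻¹)) := Finset.sum_le_sum (fun i _ => hW i)
      _ = (n : ℝ) * gb - (1 - q) * cC n q + q * dC n q := by
          have hrw : ∀ i : Fin n, (1 - q) * (if i = i₀ then gb - cC n q else gb)
              + q * (gb + dC n q * (n : ℝ)⁻¹)
              = ((1 - q) * gb + q * (gb + dC n q * (n : ℝ)⁻¹))
                + (if i = i₀ then -((1 - q) * cC n q) else 0) := by
            intro i; by_cases hi : i = i₀ <;> simp [hi] <;> ring
          simp only [hrw]
          rw [Finset.sum_add_distrib, Finset.sum_const, Finset.card_univ,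
            Fintype.card_fin, nsmul_eq_mul, Finset.sum_ite_eq' Finset.univ i₀]
          simp
          field_simp
          ring
  have hfinal : (n : ℝ)⁻¹ * ((n : ℝ) * gb - (1 - q) * cC n q + q * dC n q) + 1 ≤ gb := by
    have hkey : (n : ℝ) + q * dC n q ≤ (1 - q) * cC n q := by nlinarith
    have hexp : (n : ℝ)⁻¹ * ((n : ℝ) * gb - (1 - q) * cC n q + q * dC n q)
        = gb - (n : ℝ)⁻¹ * ((1 - q) * cC n q - q * dC n q) := by
      field_simp; ring
    rw [hexp]
    have h2 : (1:ℝ) ≤ (n : ℝ)⁻¹ * ((1 - q) * cC n q - q * dC n q) := by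
      rw [le_inv_mul_iff₀ hnR]
      linarith
    linarith
  rw [hg]
  calc (n : ℝ)⁻¹ * ∑ i, Wr q ((x, f, false) : EAState n) i + 1
      ≤ (n : ℝ)⁻¹ * ((n : ℝ) * gb - (1 - q) * cC n q + q * dC n q) + 1 := by
        have := mul_le_mul_of_nonneg_left hsum (show (0:ℝ) ≤ (n:ℝ)⁻¹ by positivity)
        linarith
    _ ≤ gb := hfinal

include hq0 hq1 hn in
lemma key_sp (x : Fin n → Bool) (hall : ∀ j, x j = true) :
    (n : ℝ)⁻¹ * ∑ i, Wr q ((x, n, false) : EAState n) i + 1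
      ≤ G q ((x, n, false) : EAState n) := by
  have hnR : (0:ℝ) < n := by exact_mod_cast hn
  have hd := dC_pos hq0 hq1 hn
  have hLx : leadingOnes x = n := lo_eq_n hall
  have hg : G q ((x, n, false) : EAState n) = 1 + dC n q := G_sp x hLx.symm
  have hOpt : isOpt n x n = true := (isOpt_iff x n).mpr ⟨hall, rfl⟩
  have hW : ∀ i : Fin n, Wr q ((x, n, false) : EAState n) i
      ≤ (1 - q) * 0 + q * (0 + dC n q * (n : ℝ)⁻¹) := by
    intro i
    have hyL : leadingOnes (Function.update x i (!x i)) = (i : ℕ) :=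
      lo_mut_lt (by omega)
    refine Wr_le3 hq0 hq1 hn _ i 0 0 (dC n q) i ?_ ?_ ?_
    · -- o = none : rejected, flag becomes true
      have hacc : ¬ (n ≤ leadingOnes (applyOneFlip (Function.update x i (!x i)) none)) := by
        rw [applyOneFlip_none, hyL]
        exact fun hcon => absurd (lt_of_lt_of_le i.isLt hcon) (lt_irrefl _)
      rw [Tr_rej hacc]
      have : G q ((x, n, false || isOpt n x n) : EAState n) = 0 := by
        apply G_flag
        rw [hOpt]
        rfl
      rw [this]
    · -- u ≠ i : rejected, flag becomes true
      intro u hune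
      have huvi : (u : ℕ) ≠ (i : ℕ) := fun h => hune (Fin.ext h)
      set y := Function.update x i (!x i) with hy
      have hfylt : leadingOnes (applyOneFlip y (some u)) < n := by
        rcases lt_or_gt_of_ne huvi with hui | hui
        · have hyu : y u = true := by
            rw [hy, mut_ne x i u hune]; exact hall u
          rw [applyOneFlip_some, hyu]
          have hl : leadingOnes (Function.update y u (!true)) = (u : ℕ) :=
            lo_update_false (by omega)
          rw [hl]
          omega
        · rw [applyOneFlip_some, lo_update_gt (by omega) _, hyL]
          omega
      have hacc : ¬ (n ≤ leadingOnes (applyOneFlip y (some u))) := by omega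
      rw [Tr_rej hacc]
      have : G q ((x, n, false || isOpt n x n) : EAState n) = 0 := by
        apply G_flag
        rw [hOpt]
        rfl
      rw [this]
    · -- u = i : restore, accepted, overvalued state
      have hres : applyOneFlip (Function.update x i (!x i)) (some i) = x := by
        rw [applyOneFlip_some]; exact mut_restore x i
      have hacc : n ≤ leadingOnes (applyOneFlip (Function.update x i (!x i)) (some i)) := by
        rw [hres, hLx]
      rw [Tr_acc hacc]
      refine le_trans (G_acc_le hq0 hq1 hn _ _ (lo_le _)) ?_
      have hfyf : leadingOnes (applyOneFlip (Function.update x i (!x i)) (some i)) = n := by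
        rw [hres, hLx]
      rw [hfyf]
      simp
  have hsum : ∑ i, Wr q ((x, n, false) : EAState n) i ≤ q * dC n q := by
    calc ∑ i, Wr q ((x, n, false) : EAState n) i
        ≤ ∑ _i : Fin n, ((1 - q) * 0 + q * (0 + dC n q * (n : ℝ)⁻¹)) :=
          Finset.sum_le_sum (fun i _ => hW i)
      _ = (n : ℝ) * ((1 - q) * 0 + q * (0 + dC n q * (n : ℝ)⁻¹)) := by
          rw [Finset.sum_const, Finset.card_univ, Fintype.card_fin, nsmul_eq_mul]
      _ = q * dC n q := by field_simp; simp
  rw [hg]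
  have h2 : (n : ℝ)⁻¹ * (q * dC n q) ≤ dC n q := by
    rw [inv_mul_le_iff₀ hnR]
    have hn1 : (1:ℝ) ≤ n := by exact_mod_cast hn
    nlinarith [mul_nonneg (show (0:ℝ) ≤ 1 - q by linarith) hd.le,
      mul_nonneg (show (0:ℝ) ≤ (n:ℝ) - 1 by linarith) hd.le]
  calc (n : ℝ)⁻¹ * ∑ i, Wr q ((x, n, false) : EAState n) i + 1
      ≤ (n : ℝ)⁻¹ * (q * dC n q) + 1 := by
        have := mul_le_mul_of_nonneg_left hsum (show (0:ℝ) ≤ (n:ℝ)⁻¹ by positivity)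
        linarith
    _ ≤ 1 + dC n q := by linarith

end Classes2

noncomputable def gE (q : ℝ) (s : EAState n) : ℝ≥0∞ := ENNReal.ofReal (G q s)

section Drift
variable (hq0 : 0 ≤ q) (hq1 : q < 1) (hn : 0 < n)

include hq0 hq1 hn in
lemma key_real (s : EAState n) (hInv : Inv s) (hflag : s.2.2 = false) :
    (n : ℝ)⁻¹ * ∑ i, Wr q s i + 1 ≤ G q s := by
  obtain ⟨x, f, b⟩ := s
  have hb : b = false := hflag
  subst hb
  rcases lt_trichotomy f (leadingOnes x) with h | h | h
  · exact key_under hq0 hq1 hn x f h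
  · by_cases hfn : f = n
    · subst hfn
      exact key_sp hq0 hq1 hn x (all_true_of_lo h.symm)
    · exact key_corr hq0 hq1 hn x f h (lt_of_le_of_ne (h ▸ lo_le x) hfn)
  · exact key_over hq0 hq1 hn x f hInv h

include hq0 hq1 hn in
lemma key_ennreal (s : EAState n) (hInv : Inv s) (hflag : s.2.2 = false) :
    1 + pexp (eaStep n hn q hq1.le s) (gE q) ≤ gE q s := by
  have hfled := inv_le_n hInv
  have hGnn : ∀ i o, 0 ≤ G q (Tr s i o) :=
    fun i o => G_nonneg hq0 hq1 hn (Tr_snd_le hfled i o)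
  have hWnn : ∀ i : Fin n, 0 ≤ Wr q s i := by
    intro i
    unfold Wr
    have h1 : (0:ℝ) ≤ (n : ℝ)⁻¹ := by positivity
    have h2 : (0:ℝ) ≤ ∑ u : Fin n, G q (Tr s i (some u)) :=
      Finset.sum_nonneg (fun u _ => hGnn i (some u))
    have h3 : (0:ℝ) ≤ 1 - q := by linarith
    exact add_nonneg (mul_nonneg h3 (hGnn i none)) (mul_nonneg hq0 (mul_nonneg h1 h2))
  have hsnn : (0:ℝ) ≤ ∑ i : Fin n, Wr q s i :=
    Finset.sum_nonneg (fun i _ => hWnn i)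
  have hRnn : (0:ℝ) ≤ (n : ℝ)⁻¹ * ∑ i, Wr q s i :=
    mul_nonneg (by positivity) hsnn
  unfold gE
  rw [pexp_step_eq hn hq0 hq1 hfled]
  rw [← ENNReal.ofReal_one, ← ENNReal.ofReal_add (by norm_num) hRnn]
  apply ENNReal.ofReal_le_ofReal
  have := key_real hq0 hq1 hn s hInv hflag
  linarith

include hq0 hq1 hn in
lemma support_inv : ∀ t : ℕ, ∀ s ∈ (eaDist n hn q hq1.le t).support, Inv s := by
  intro t
  induction t with
  | zero =>
    intro s hs
    have : s ∈ (eaInit n hn q hq1.le).support := hs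
    unfold eaInit at this
    rw [PMF.mem_support_bind_iff] at this
    obtain ⟨x, -, hs'⟩ := this
    rw [PMF.mem_support_bind_iff] at hs'
    obtain ⟨o, -, hs''⟩ := hs'
    rw [PMF.mem_support_pure_iff] at hs''
    subst hs''
    exact ⟨o, rfl⟩
  | succ t ih =>
    intro s hs
    have : s ∈ ((eaDist n hn q hq1.le t).bind (eaStep n hn q hq1.le)).support := hs
    rw [PMF.mem_support_bind_iff] at this
    obtain ⟨s₀, hs₀, hs'⟩ := this
    rw [eaStep_eq, PMF.mem_support_bind_iff] at hs'
    obtain ⟨i, -, hs''⟩ := hs'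
    rw [PMF.mem_support_bind_iff] at hs''
    obtain ⟨o, -, hs'''⟩ := hs''
    rw [PMF.mem_support_pure_iff] at hs'''
    subst hs'''
    exact Tr_inv (ih s₀ hs₀) i o

include hq0 hq1 hn in
lemma drift_step (t : ℕ) :
    (eaDist n hn q hq1.le t).toOuterMeasure {s : EAState n | s.2.2 = false}
        + pexp (eaDist n hn q hq1.le (t + 1)) (gE q)
      ≤ pexp (eaDist n hn q hq1.le t) (gE q) := by
  rw [toOuterMeasure_eq_pexp]
  rw [show eaDist n hn q hq1.le (t+1) = (eaDist n hn q hq1.le t).bind (eaStep n hn q hq1.le)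
    from rfl]
  rw [pexp_bind, ← pexp_add]
  apply pexp_mono_support
  intro s hs
  rcases Bool.eq_false_or_eq_true s.2.2 with hflag | hflag
  · rw [if_neg (by simp [hflag])]
    have hzero : pexp (eaStep n hn q hq1.le s) (gE q) = 0 := pexp_step_flag hn hq0 hq1 hflag
    rw [hzero, zero_add]
    exact zero_le
  · rw [if_pos hflag]
    exact key_ennreal hq0 hq1 hn s (support_inv hq0 hq1 hn t s hs) hflag

include hq0 hq1 hn in
lemma drift_sum (N : ℕ) :
    (∑ t ∈ Finset.range N,
        (eaDist n hn q hq1.le t).toOuterMeasure {s : EAState n | s.2.2 = false})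
        + pexp (eaDist n hn q hq1.le N) (gE q)
      ≤ pexp (eaDist n hn q hq1.le 0) (gE q) := by
  induction N with
  | zero => simp
  | succ N ih =>
    rw [Finset.sum_range_succ]
    calc ∑ t ∈ Finset.range N, (eaDist n hn q hq1.le t).toOuterMeasure _
          + (eaDist n hn q hq1.le N).toOuterMeasure _
          + pexp (eaDist n hn q hq1.le (N + 1)) (gE q)
        = ∑ t ∈ Finset.range N, (eaDist n hn q hq1.le t).toOuterMeasure _
            + ((eaDist n hn q hq1.le N).toOuterMeasure _
              + pexp (eaDist n hn q hq1.le (N + 1)) (gE q)) := by ring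
      _ ≤ ∑ t ∈ Finset.range N, (eaDist n hn q hq1.le t).toOuterMeasure _
            + pexp (eaDist n hn q hq1.le N) (gE q) :=
          add_le_add_right (drift_step hq0 hq1 hn N) _
      _ ≤ pexp (eaDist n hn q hq1.le 0) (gE q) := ih

def Ini (x : Fin n → Bool) (o : Option (Fin n)) : EAState n :=
  (x, leadingOnes (applyOneFlip x o), isOpt n x (leadingOnes (applyOneFlip x o)))

lemma eaInit_eq (hn : 0 < n) (q : ℝ) (hq1 : q ≤ 1) :
    eaInit n hn q hq1 = (PMF.uniformOfFintype (Fin n → Bool)).bind (fun x =>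
      (oneBitNoise n hn q hq1).bind (fun o => PMF.pure (Ini x o))) := rfl

lemma gauss (k : ℕ) : (∑ m ∈ Finset.range k, (m : ℝ)) * 2 = (k : ℝ) * ((k : ℝ) - 1) := by
  induction k with
  | zero => simp
  | succ k ih =>
    rw [Finset.sum_range_succ]
    push_cast
    push_cast at ih
    linarith

lemma isOpt_false_of_not_all {x : Fin n → Bool} (h : leadingOnes x < n) (f : ℕ) :
    isOpt n x f = false := by
  rw [Bool.eq_false_iff]
  intro hc
  obtain ⟨hall, -⟩ := (isOpt_iff x f).mp hc
  rw [lo_eq_n hall] at h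
  exact lt_irrefl n h

include hq0 hq1 hn in
lemma init_real (x : Fin n → Bool) :
    (1 - q) * G q (Ini x none)
      + q * ((n : ℝ)⁻¹ * ∑ u, G q (Ini x (some u))) ≤ cC n q * n := by
  have hnR : (0:ℝ) < n := by exact_mod_cast hn
  have hn1 : (1:ℝ) ≤ n := by exact_mod_cast hn
  have hd := dC_pos hq0 hq1 hn
  have hc := cC_pos hq0 hq1 hn
  have hdc := dC_le_cC hq0 hq1 hn
  have hdn := dC_ge_n hq0 hq1 hn
  have hdeq := dC_eq (n := n) hq1
  have hceq := cC_eq (n := n) hq1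
  have hLn : leadingOnes x ≤ n := lo_le x
  have hLr : ((leadingOnes x : ℕ) : ℝ) ≤ n := by exact_mod_cast hLn
  by_cases hLeq : leadingOnes x = n
  · -- all-ones initial string
    have hall : ∀ j, x j = true := all_true_of_lo hLeq
    have hA : G q (Ini x none) = 0 := by
      apply G_flag
      show isOpt n x (leadingOnes (applyOneFlip x none)) = true
      rw [applyOneFlip_none, hLeq]
      exact (isOpt_iff x n).mpr ⟨hall, rfl⟩
    have hBu : ∀ u : Fin n, G q (Ini x (some u))
        ≤ cC n q * ((n : ℝ) - (u : ℕ)) + dC n q := by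
      intro u
      have hfu : leadingOnes (applyOneFlip x (some u)) = (u : ℕ) := by
        rw [applyOneFlip_some]
        exact lo_mut_lt (by omega)
      have heq : Ini x (some u) = ((x, (u : ℕ), false) : EAState n) := by
        unfold Ini
        rw [hfu, isOpt_false_of_ne_n (by omega)]
      rw [heq, G_ne x _ (by omega)]
    have hsig : ∑ u : Fin n, G q (Ini x (some u))
        ≤ cC n q * ((n:ℝ) * n - (n:ℝ) * ((n:ℝ) - 1) / 2) + (n:ℝ) * dC n q := by
      calc ∑ u : Fin n, G q (Ini x (some u))
          ≤ ∑ u : Fin n, (cC n q * ((n : ℝ) - ((u:ℕ):ℝ)) + dC n q) :=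
            Finset.sum_le_sum (fun u _ => hBu u)
        _ = ∑ m ∈ Finset.range n, (cC n q * ((n : ℝ) - (m:ℝ)) + dC n q) :=
            Fin.sum_univ_eq_sum_range (fun m => cC n q * ((n : ℝ) - (m:ℝ)) + dC n q) n
        _ = cC n q * ((n:ℝ) * n - (n:ℝ) * ((n:ℝ) - 1) / 2) + (n:ℝ) * dC n q := by
            rw [Finset.sum_add_distrib, Finset.sum_const, Finset.card_range, nsmul_eq_mul,
              ← Finset.mul_sum, Finset.sum_sub_distrib, Finset.sum_const,
              Finset.card_range, nsmul_eq_mul]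
            have hg := gauss n
            have : ∑ m ∈ Finset.range n, (m:ℝ) = (n:ℝ) * ((n:ℝ) - 1) / 2 := by linarith
            rw [this]
    -- final arithmetic
    have h1q : (0:ℝ) < 1 + q := by linarith
    have key2 : q*(((n:ℝ)+1)/2)*(1+q) + q*(1-q) ≤ (n:ℝ)*(1+q) := by
      nlinarith [mul_nonneg (mul_nonneg (show (0:ℝ) ≤ (n:ℝ) - 1 by linarith)
        (show (0:ℝ) ≤ 1 + q by linarith)) (show (0:ℝ) ≤ 2 - q by linarith)]
    have e1 : q*(1+q)*(dC n q) = q*(1-q)*(cC n q) := by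
      nlinarith [hceq]
    have key3 : q*(cC n q*(((n:ℝ)+1)/2) + dC n q) ≤ cC n q * n := by
      nlinarith [mul_le_mul_of_nonneg_right key2 hc.le, e1, h1q]
    have hqS : q * (cC n q * ((n:ℝ) * n - (n:ℝ) * ((n:ℝ) - 1) / 2) + (n:ℝ) * dC n q)
        ≤ (n:ℝ) * (cC n q * n) := by
      have : cC n q * ((n:ℝ) * n - (n:ℝ) * ((n:ℝ) - 1) / 2) + (n:ℝ) * dC n q
          = (n:ℝ) * (cC n q*(((n:ℝ)+1)/2) + dC n q) := by ring
      rw [this]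
      calc q * ((n:ℝ) * (cC n q*(((n:ℝ)+1)/2) + dC n q))
          = (n:ℝ) * (q * (cC n q*(((n:ℝ)+1)/2) + dC n q)) := by ring
        _ ≤ (n:ℝ) * (cC n q * n) := by
            apply mul_le_mul_of_nonneg_left key3 (by positivity)
    rw [hA, mul_zero, zero_add]
    have h6 : q * ((n:ℝ)⁻¹ * ∑ u : Fin n, G q (Ini x (some u)))
        ≤ (n:ℝ)⁻¹ * ((n:ℝ) * (cC n q * n)) := by
      have hstep : q * ∑ u : Fin n, G q (Ini x (some u))
          ≤ (n:ℝ) * (cC n q * n) :=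
        le_trans (mul_le_mul_of_nonneg_left hsig hq0) hqS
      calc q * ((n:ℝ)⁻¹ * ∑ u : Fin n, G q (Ini x (some u)))
          = (n:ℝ)⁻¹ * (q * ∑ u : Fin n, G q (Ini x (some u))) := by ring
        _ ≤ (n:ℝ)⁻¹ * ((n:ℝ) * (cC n q * n)) :=
            mul_le_mul_of_nonneg_left hstep (by positivity)
    have h7 : (n:ℝ)⁻¹ * ((n:ℝ) * (cC n q * n)) = cC n q * n := by
      field_simp
    linarith
  · -- leadingOnes x < n
    have hLlt : leadingOnes x < n := lt_of_le_of_ne hLn hLeq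
    set l : ℝ := ((leadingOnes x : ℕ) : ℝ) with hl
    have hA : G q (Ini x none) = cC n q * ((n:ℝ) - l) := by
      show G q (x, leadingOnes (applyOneFlip x none),
        isOpt n x (leadingOnes (applyOneFlip x none))) = _
      rw [applyOneFlip_none, isOpt_false_of_ne_n hLeq]
      exact G_corr x _ rfl hLeq
    have hBu : ∀ u : Fin n, G q (Ini x (some u))
        ≤ (if (u:ℕ) < leadingOnes x then cC n q * ((n : ℝ) - (u:ℕ)) + dC n q
           else if (u:ℕ) = leadingOnes x then cC n q * ((n:ℝ) - l - 1) + dC n q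
           else cC n q * ((n:ℝ) - l)) := by
      intro u
      rcases lt_trichotomy ((u:ℕ)) (leadingOnes x) with h | h | h
      · rw [if_pos h]
        have hfu : leadingOnes (applyOneFlip x (some u)) = (u : ℕ) := by
          rw [applyOneFlip_some]; exact lo_mut_lt h
        have heq : Ini x (some u) = ((x, (u : ℕ), false) : EAState n) := by
          unfold Ini
          rw [hfu, isOpt_false_of_ne_n (by omega)]
        rw [heq, G_ne x _ (by omega)]
      · rw [if_neg (by omega), if_pos h]
        have hgt : leadingOnes x < leadingOnes (applyOneFlip x (some u)) := by
          rw [applyOneFlip_some]; exact lo_mut_eq h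
        have heq : Ini x (some u) = ((x, leadingOnes (applyOneFlip x (some u)), false)
            : EAState n) := by
          unfold Ini
          rw [isOpt_false_of_not_all hLlt]
        rw [heq, G_ne x _ (by omega)]
        have hcast : l + 1 ≤ ((leadingOnes (applyOneFlip x (some u)) : ℕ) : ℝ) := by
          have : leadingOnes x + 1 ≤ leadingOnes (applyOneFlip x (some u)) := by omega
          rw [hl]; exact_mod_cast this
        nlinarith
      · rw [if_neg (by omega), if_neg (by omega)]
        have hfu : leadingOnes (applyOneFlip x (some u)) = leadingOnes x := by
          rw [applyOneFlip_some]; exact lo_mut_gt h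
        have heq : Ini x (some u) = ((x, leadingOnes x, false) : EAState n) := by
          unfold Ini
          rw [hfu, isOpt_false_of_ne_n hLeq]
        rw [heq, G_corr x _ rfl hLeq]
    have hLlt' : leadingOnes x + 1 ≤ n := hLlt
    have hsig : ∑ u : Fin n, G q (Ini x (some u))
        ≤ (cC n q * (l*(n:ℝ) - l*(l-1)/2) + l*dC n q)
          + ((cC n q*((n:ℝ) - l - 1) + dC n q) + ((n:ℝ) - l - 1)*(cC n q*((n:ℝ) - l))) := by
      set F : ℕ → ℝ := fun m =>
        if m < leadingOnes x then cC n q * ((n : ℝ) - m) + dC n q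
        else if m = leadingOnes x then cC n q * ((n:ℝ) - l - 1) + dC n q
        else cC n q * ((n:ℝ) - l) with hF
      have hBB : ∑ u : Fin n, G q (Ini x (some u)) ≤ ∑ m ∈ Finset.range n, F m := by
        calc ∑ u : Fin n, G q (Ini x (some u)) ≤ ∑ u : Fin n, F (u : ℕ) :=
              Finset.sum_le_sum (fun u _ => hBu u)
          _ = ∑ m ∈ Finset.range n, F m := Fin.sum_univ_eq_sum_range F n
      refine le_trans hBB (le_of_eq ?_)
      rw [← Finset.sum_range_add_sum_Ico F (le_of_lt hLlt)]
      have hpart1 : ∑ m ∈ Finset.range (leadingOnes x), F m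
          = cC n q * (l*(n:ℝ) - l*(l-1)/2) + l*dC n q := by
        have hcong : ∀ m ∈ Finset.range (leadingOnes x),
            F m = cC n q * ((n : ℝ) - m) + dC n q := by
          intro m hm
          rw [hF]
          simp only []
          rw [if_pos (Finset.mem_range.mp hm)]
        rw [Finset.sum_congr rfl hcong]
        rw [Finset.sum_add_distrib, Finset.sum_const, Finset.card_range, nsmul_eq_mul,
          ← Finset.mul_sum, Finset.sum_sub_distrib, Finset.sum_const,
          Finset.card_range, nsmul_eq_mul]
        have hg := gauss (leadingOnes x)
        have hsl : ∑ m ∈ Finset.range (leadingOnes x), (m:ℝ) = l*(l - 1) / 2 := by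
          rw [hl]; linarith
        rw [hsl]
      have hpart2 : ∑ m ∈ Finset.Ico (leadingOnes x) n, F m
          = (cC n q*((n:ℝ) - l - 1) + dC n q) + ((n:ℝ) - l - 1)*(cC n q*((n:ℝ) - l)) := by
        rw [Finset.sum_eq_sum_Ico_succ_bot hLlt]
        have hFL : F (leadingOnes x) = cC n q*((n:ℝ) - l - 1) + dC n q := by
          rw [hF]
          simp only []
          rw [if_neg (lt_irrefl _)]
          simp
        have hFtail : ∀ m ∈ Finset.Ico (leadingOnes x + 1) n,
            F m = cC n q * ((n:ℝ) - l) := by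
          intro m hm
          have hm1 := (Finset.mem_Ico.mp hm).1
          rw [hF]
          simp only []
          rw [if_neg (by omega), if_neg (by omega)]
        rw [hFL, Finset.sum_congr rfl hFtail, Finset.sum_const, Nat.card_Ico, nsmul_eq_mul]
        have hcard : (((n - (leadingOnes x + 1) : ℕ)) : ℝ) = (n:ℝ) - l - 1 := by
          rw [hl]
          push_cast [Nat.cast_sub hLlt']
          ring
        rw [hcard]
      rw [hpart1, hpart2]
    -- the key polynomial inequality
    have hl0 : (0:ℝ) ≤ l := by rw [hl]; positivity
    have hlt : l + 1 ≤ (n:ℝ) := by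
      rw [hl]
      exact_mod_cast hLlt
    have hK : q*(cC n q*(l*(l+1)/2 - 1) + (l+1)*dC n q) ≤ cC n q*l*(n:ℝ) := by
      rcases eq_or_lt_of_le hl0 with h0 | h0
      · -- l = 0
        rw [← h0]
        have : q*(cC n q*(0*(0+1)/2 - 1) + (0+1)*dC n q) = -(q*(cC n q - dC n q)) := by ring
        rw [this]
        have : (0:ℝ) ≤ q*(cC n q - dC n q) := mul_nonneg hq0 (by linarith)
        nlinarith
      · -- l ≥ 1
        have hl1 : (1:ℝ) ≤ l := by
          rw [hl] at h0 ⊢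
          have : 0 < leadingOnes x := by exact_mod_cast h0
          exact_mod_cast this
        have ht2 : (2:ℝ) ≤ n := by linarith
        have s1 : q*(l+3) ≤ 2*(n:ℝ) := by
          linarith [mul_nonneg (show (0:ℝ) ≤ 1 - q by linarith)
            (show (0:ℝ) ≤ l + 3 by linarith)]
        have s2 : q*((l+1)*dC n q) ≤ q*((l+1)*cC n q) := by
          apply mul_le_mul_of_nonneg_left _ hq0
          apply mul_le_mul_of_nonneg_left hdc (by linarith)
        have s4 : q*(cC n q)*(l*(l+3))/2 ≤ cC n q*l*(n:ℝ) := by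
          nlinarith [mul_nonneg (mul_nonneg hc.le hl0)
            (show (0:ℝ) ≤ 2*(n:ℝ) - q*(l+3) by linarith)]
        linarith [s2, s4]
    have hkey2 : q*((cC n q * (l*(n:ℝ) - l*(l-1)/2) + l*dC n q)
          + ((cC n q*((n:ℝ) - l - 1) + dC n q) + ((n:ℝ) - l - 1)*(cC n q*((n:ℝ) - l))))
        ≤ (n:ℝ)*(cC n q*(n:ℝ)) - (n:ℝ)*((1-q)*(cC n q)*((n:ℝ)-l)) := by
      linarith [hK]
    -- final assembly
    have h5 : q * ∑ u : Fin n, G q (Ini x (some u))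
        ≤ (n:ℝ)*(cC n q*(n:ℝ)) - (n:ℝ)*((1-q)*(cC n q)*((n:ℝ)-l)) :=
      le_trans (mul_le_mul_of_nonneg_left hsig hq0) hkey2
    have h6 : (n:ℝ)⁻¹ * (q * ∑ u : Fin n, G q (Ini x (some u)))
        ≤ (n:ℝ)⁻¹ * ((n:ℝ)*(cC n q*(n:ℝ)) - (n:ℝ)*((1-q)*(cC n q)*((n:ℝ)-l))) :=
      mul_le_mul_of_nonneg_left h5 (by positivity)
    have h7 : (n:ℝ)⁻¹ * ((n:ℝ)*(cC n q*(n:ℝ)) - (n:ℝ)*((1-q)*(cC n q)*((n:ℝ)-l)))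
        = cC n q*(n:ℝ) - (1-q)*(cC n q)*((n:ℝ)-l) := by
      field_simp
    have h8 : q * ((n:ℝ)⁻¹ * ∑ u : Fin n, G q (Ini x (some u)))
        = (n:ℝ)⁻¹ * (q * ∑ u : Fin n, G q (Ini x (some u))) := by ring
    rw [hA, h8]
    rw [h7] at h6
    linarith

include hq0 hq1 hn in
lemma init_bound : pexp (eaInit n hn q hq1.le) (gE q) ≤ ENNReal.ofReal (cC n q * n) := by
  rw [eaInit_eq, pexp_bind]
  apply pexp_le_const
  intro x
  rw [pexp_bind]
  have hGnn : ∀ o, 0 ≤ G q (Ini x o) := by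
    intro o
    apply G_nonneg hq0 hq1 hn
    exact lo_le _
  have hpp : ∀ o, pexp (PMF.pure (Ini x o)) (gE q) = ENNReal.ofReal (G q (Ini x o)) :=
    fun o => pexp_pure _ _
  simp only [hpp]
  rw [pexp_noise hn q hq1.le]
  rw [comb_eq hn hq0 hq1 _ (hGnn none) _ (fun u => hGnn (some u))]
  exact ENNReal.ofReal_le_ofReal (init_real hq0 hq1 hn x)

end Drift

end Main
end EA

/-- The expected number of iterations until the (1+1) EA with one-bit mutation,
optimizing LeadingOnes of size `n` under one-bit noise with rate `q < 1` and without
re-evaluations, has the all-ones string as parent with correctly evaluated fitness,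
is at most `(1+q)n²/(1-q)² + 3q/(2(1-q))`.  The expected hitting time is expressed as
`∑_{t≥0} P[not yet reached at iteration t]`. -/
theorem stmt_12 (n : ℕ) (hn : 0 < n) (q : ℝ) (hq0 : 0 ≤ q) (hq1 : q < 1) :
    ∑' t : ℕ,
        (eaDist n hn q hq1.le t).toOuterMeasure {s : EAState n | s.2.2 = false}
      ≤ ENNReal.ofReal ((1 + q) * n ^ 2 / (1 - q) ^ 2 + 3 * q / (2 * (1 - q))) := by
  have hfin : ∀ N : ℕ, ∑ t ∈ Finset.range N,
      (eaDist n hn q hq1.le t).toOuterMeasure {s : EAState n | s.2.2 = false}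
      ≤ EA.pexp (eaDist n hn q hq1.le 0) (EA.gE q) := by
    intro N
    calc ∑ t ∈ Finset.range N,
        (eaDist n hn q hq1.le t).toOuterMeasure {s : EAState n | s.2.2 = false}
        ≤ ∑ t ∈ Finset.range N,
            (eaDist n hn q hq1.le t).toOuterMeasure {s : EAState n | s.2.2 = false}
          + EA.pexp (eaDist n hn q hq1.le N) (EA.gE q) := le_self_add
      _ ≤ _ := EA.drift_sum hq0 hq1 hn N
  have hinit : EA.pexp (eaDist n hn q hq1.le 0) (EA.gE q)
      ≤ ENNReal.ofReal (EA.cC n q * n) := EA.init_bound hq0 hq1 hn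
  have htarget : ENNReal.ofReal (EA.cC n q * n)
      ≤ ENNReal.ofReal ((1 + q) * n ^ 2 / (1 - q) ^ 2 + 3 * q / (2 * (1 - q))) := by
    apply ENNReal.ofReal_le_ofReal
    have he : (0:ℝ) < 1 - q := by linarith
    have h2 : (0:ℝ) ≤ 3 * q / (2 * (1 - q)) := by positivity
    have h3 : EA.cC n q * n = (1 + q) * n ^ 2 / (1 - q) ^ 2 := by
      rw [EA.cC]; ring
    linarith
  rw [ENNReal.tsum_eq_iSup_nat]
  apply iSup_le
  intro N
  exact le_trans (hfin N) (le_trans hinit htarget)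
end

section
/- For all real r > q > 0 and all integers n ≥ j ≥ 2, ∑_{k=j}^{n} q^k/(r^k - q^k) ≤ -ln(1 - q/r)/ln(r/q). -/
lemma step15 (a : ℝ) (ha : 1 < a) (m : ℕ) (hm : 1 ≤ m) :
    Real.log a / (a ^ (m+1) - 1) ≤
      Real.log (1 - a⁻¹ ^ (m+1)) - Real.log (1 - a⁻¹ ^ m) := by
  have ha0 : (0:ℝ) < a := lt_trans one_pos ha
  have hane : a ≠ 0 := ha0.ne'
  have hinv : a⁻¹ < 1 := inv_lt_one_of_one_lt₀ ha
  have hinv0 : 0 < a⁻¹ := inv_pos.mpr ha0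
  have h1 : (0:ℝ) < a ^ (m+1) - 1 := sub_pos.mpr (one_lt_pow₀ ha (Nat.succ_ne_zero m))
  have h1m : (0:ℝ) < a ^ m - 1 := sub_pos.mpr (one_lt_pow₀ ha (by omega))
  have hpm : a < a ^ (m+1) := by
    calc a = a ^ 1 := (pow_one a).symm
    _ < a ^ (m+1) := pow_lt_pow_right₀ ha (by omega)
  have hxpos : (0:ℝ) < (a ^ (m+1) - a) / (a ^ (m+1) - 1) :=
    div_pos (sub_pos.mpr hpm) h1
  have h2 : (0:ℝ) < 1 - a⁻¹ ^ (m+1) := sub_pos.mpr (pow_lt_one₀ hinv0.le hinv (Nat.succ_ne_zero m))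
  have h3 : (0:ℝ) < 1 - a⁻¹ ^ m := sub_pos.mpr (pow_lt_one₀ hinv0.le hinv (by omega))
  have key : Real.log (1 - a⁻¹ ^ (m+1)) - Real.log (1 - a⁻¹ ^ m)
      = - Real.log ((a ^ (m+1) - a) / (a ^ (m+1) - 1)) := by
    rw [← Real.log_div h2.ne' h3.ne', ← Real.log_inv]
    congr 1
    rw [inv_div]
    rw [div_eq_div_iff h3.ne' (sub_pos.mpr hpm).ne']
    field_simp
    have e1 : a * a⁻¹ = 1 := mul_inv_cancel₀ hane
    have e2 : a ^ m * a⁻¹ ^ m = 1 := by rw [← mul_pow, e1, one_pow]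
    linear_combination (a⁻¹ ^ m - a ^ m * a⁻¹ ^ m) * e1 + (a - 1) * e2
  rw [key]
  have hx := Real.log_le_sub_one_of_pos hxpos
  have hxe : (a ^ (m+1) - a) / (a ^ (m+1) - 1) - 1 = -((a - 1) / (a ^ (m+1) - 1)) := by
    field_simp
    ring
  have hloga : Real.log a ≤ a - 1 := Real.log_le_sub_one_of_pos ha0
  calc Real.log a / (a ^ (m+1) - 1) ≤ (a - 1) / (a ^ (m+1) - 1) := by gcongr
    _ ≤ - Real.log ((a ^ (m+1) - a) / (a ^ (m+1) - 1)) := by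
        rw [hxe] at hx; linarith


lemma tele15 (a : ℝ) (ha : 1 < a) (m n : ℕ) (hm : 1 ≤ m) (hn : m + 1 ≤ n) :
    ∑ k ∈ Finset.Icc (m+1) n, Real.log a / (a ^ k - 1) ≤
      Real.log (1 - a⁻¹ ^ n) - Real.log (1 - a⁻¹ ^ m) := by
  induction n, hn using Nat.le_induction with
  | base => simpa [Finset.Icc_self] using step15 a ha m hm
  | succ n hn ih =>
      rw [Finset.sum_Icc_succ_top (by omega)]
      have := step15 a ha n (by omega)
      linarith

theorem stmt_15 (r q : ℝ) (hq : 0 < q) (hqr : q < r) (j n : ℕ) (hj : 2 ≤ j) (hjn : j ≤ n) :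
    ∑ k ∈ Finset.Icc j n, q ^ k / (r ^ k - q ^ k) ≤ - Real.log (1 - q / r) / Real.log (r / q) := by
  have hr : 0 < r := hq.trans hqr
  have ha : 1 < r / q := (one_lt_div hq).mpr hqr
  have ha0 : 0 < r / q := lt_trans one_pos ha
  have hL : 0 < Real.log (r / q) := Real.log_pos ha
  obtain ⟨m, rfl⟩ : ∃ m, j = m + 1 := ⟨j - 1, by omega⟩
  have hm : 1 ≤ m := by omega
  rw [le_div_iff₀ hL]
  have hterm : ∀ k ∈ Finset.Icc (m+1) n,
      q ^ k / (r ^ k - q ^ k) * Real.log (r / q) = Real.log (r/q) / ((r/q) ^ k - 1) := by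
    intro k hk
    have hq0 : (0:ℝ) < q ^ k := pow_pos hq k
    have hd : (r/q) ^ k - 1 = (r ^ k - q ^ k) / q ^ k := by
      rw [div_pow]; field_simp
    rw [hd, div_div_eq_mul_div, mul_comm, mul_div_assoc]
  rw [Finset.sum_mul, Finset.sum_congr rfl hterm]
  have htele := tele15 (r/q) ha m n hm hjn
  have hinv : (r/q)⁻¹ = q / r := by rw [inv_div]
  have hinvlt : q / r < 1 := (div_lt_one hr).mpr hqr
  have hinv0 : 0 < q / r := div_pos hq hr
  have h1 : Real.log (1 - (r/q)⁻¹ ^ n) ≤ 0 := by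
    apply Real.log_nonpos
    · have : (r/q)⁻¹ ^ n ≤ 1 := pow_le_one₀ (by rw [hinv]; exact hinv0.le) (by rw [hinv]; exact hinvlt.le)
      linarith
    · nlinarith [pow_pos (show (0:ℝ) < (r/q)⁻¹ by rw [hinv]; exact hinv0) n]
  have h2 : Real.log (1 - q / r) ≤ Real.log (1 - (r/q)⁻¹ ^ m) := by
    rw [hinv]
    apply Real.log_le_log (by linarith)
    have : (r/q)⁻¹ ^ m ≤ (r/q)⁻¹ ^ 1 :=
      pow_le_pow_of_le_one (by rw [hinv]; exact hinv0.le) (by rw [hinv]; exact hinvlt.le) hm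
    rw [pow_one, hinv] at this
    linarith
  linarith
end
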